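/- Let α ≥ 0, α ≠ 1, let K ≥ 1, and let b₁, ..., b_K be real numbers. If α ∈ [0,1), let Z be the unique real number such that the vector v* with v*_i = exp_α( max{ −b_i − Z, −1/(1−α) } ) satisfies Σ_i v*_i = 1; if α > 1, let Z be the unique real number such that v*_i = exp_α( −b_i − Z ) satisfies Σ_i v*_i = 1. In either case, v* is a minimizer of min_{v ∈ Δ_K} max_{m ∈ Δ_K} Σ_{i=1}^K ( ℓ_α(v, i) − b_i ) m_i. (Applied with b_i = φ_i^{*c}(x̃) for a dual optimizer, this gives the optimal robust classifier for the α-logarithmic loss.) -/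

import Mathlib

open scoped ENNReal BigOperators

noncomputable section

/-- The `α`-logarithm `log_α(t) = (t^{1−α} − 1)/(1−α)`. -/
def logAlpha (α t : ℝ) : ℝ := (t ^ (1 - α) - 1) / (1 - α)

/-- The `α`-exponential `exp_α(s) = ((1−α)s + 1)^{1/(1−α)}`. -/
def expAlpha (α s : ℝ) : ℝ := ((1 - α) * s + 1) ^ (1 / (1 - α))

/-- The `α`-logarithmic loss `ℓ_α(v,i) = −log_α(v_i)` as a function of
`t = v_i ∈ [0,1]`: for `t > 0` it is `−log_α(t)`; at `t = 0` it equals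
`1/(1−α)` when `α ∈ [0,1)` and `+∞` when `α > 1`. -/
def lossAlpha (α t : ℝ) : EReal :=
  if 0 < t then ((-logAlpha α t : ℝ) : EReal)
  else if α < 1 then ((1 / (1 - α) : ℝ) : EReal) else ⊤

/-- The inner max-objective `max_{m ∈ Δ_K} ∑_i (ℓ_α(v,i) − b_i) m_i`. -/
def alphaMinimaxObj (α : ℝ) {K : ℕ} (b : Fin K → ℝ) (v : Fin K → ℝ) : EReal :=
  ⨆ m ∈ stdSimplex ℝ (Fin K),
    ∑ i, (m i : EReal) * (lossAlpha α (v i) - (b i : EReal))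

lemma ereal_coe_sum {ι : Type*} (s : Finset ι) (f : ι → ℝ) :
    ((∑ i ∈ s, f i : ℝ) : EReal) = ∑ i ∈ s, (f i : EReal) :=
  map_sum (⟨⟨(↑), EReal.coe_zero⟩, EReal.coe_add⟩ : ℝ →+ EReal) f s

lemma obj_le_of (α Z : ℝ) {K : ℕ} (b : Fin K → ℝ) (v : Fin K → ℝ)
    (h : ∀ i, ∃ r : ℝ, lossAlpha α (v i) = (r : EReal) ∧ r - b i ≤ Z) :
    alphaMinimaxObj α b v ≤ (Z : EReal) := by
  choose r hr hrZ using h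
  refine iSup₂_le fun m hm => ?_
  have : ∑ i, (m i : EReal) * (lossAlpha α (v i) - (b i : EReal))
      = ((∑ i, m i * (r i - b i) : ℝ) : EReal) := by
    rw [ereal_coe_sum]
    refine Finset.sum_congr rfl fun i _ => ?_
    rw [hr i, ← EReal.coe_sub, ← EReal.coe_mul]
  rw [this]
  apply EReal.coe_le_coe_iff.2
  calc ∑ i, m i * (r i - b i) ≤ ∑ i, m i * Z := by
        refine Finset.sum_le_sum fun i _ => ?_
        exact mul_le_mul_of_nonneg_left (hrZ i) (hm.1 i)
    _ = Z := by rw [← Finset.sum_mul, hm.2, one_mul]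

lemma le_obj_of (α Z : ℝ) {K : ℕ} (b : Fin K → ℝ) (v : Fin K → ℝ) (j : Fin K)
    (h : (Z : EReal) ≤ lossAlpha α (v j) - (b j : EReal)) :
    (Z : EReal) ≤ alphaMinimaxObj α b v := by
  refine h.trans ?_
  have hmem := single_mem_stdSimplex ℝ (ι := Fin K) j
  refine le_trans (le_of_eq ?_)
    (le_iSup₂ (f := fun m (_ : m ∈ stdSimplex ℝ (Fin K)) =>
      ∑ i, (m i : EReal) * (lossAlpha α (v i) - (b i : EReal))) (Pi.single j 1) hmem)
  rw [Finset.sum_eq_single j]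
  · rw [Pi.single_eq_same]; norm_num
  · intro i _ hij
    rw [Pi.single_eq_of_ne hij]; norm_num
  · simp

lemma logAlpha_aux {α : ℝ} (hα : α ≠ 1) : ((1:ℝ)-α) ≠ 0 :=
  sub_ne_zero.2 (Ne.symm hα)

lemma expAlpha_logAlpha {α t : ℝ} (hα : α ≠ 1) (ht : 0 < t) :
    expAlpha α (logAlpha α t) = t := by
  have hβ := logAlpha_aux hα
  unfold expAlpha logAlpha
  rw [show (1-α) * ((t ^ (1-α) - 1)/(1-α)) + 1 = t ^ (1-α) from by field_simp; ring,
    ← Real.rpow_mul ht.le, mul_one_div_cancel hβ, Real.rpow_one]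

lemma logAlpha_expAlpha {α s : ℝ} (hα : α ≠ 1) (hbase : 0 < (1-α)*s + 1) :
    logAlpha α (expAlpha α s) = s := by
  have hβ := logAlpha_aux hα
  unfold expAlpha logAlpha
  rw [← Real.rpow_mul hbase.le, one_div_mul_cancel hβ, Real.rpow_one]
  field_simp
  ring

theorem statement5 (α : ℝ) (hα0 : 0 ≤ α) (hα1 : α ≠ 1)
    {K : ℕ} (hK : 1 ≤ K) (b : Fin K → ℝ) (Z : ℝ)
    (hdom : 1 < α → ∀ i, -(b i) - Z < -(1 / (1 - α)))
    (hsum : ∑ i, (if α < 1 then expAlpha α (max (-(b i) - Z) (-(1 / (1 - α))))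
        else expAlpha α (-(b i) - Z)) = 1) :
    (fun i => if α < 1 then expAlpha α (max (-(b i) - Z) (-(1 / (1 - α))))
        else expAlpha α (-(b i) - Z)) ∈ stdSimplex ℝ (Fin K) ∧
    ∀ v ∈ stdSimplex ℝ (Fin K),
      alphaMinimaxObj α b
        (fun i => if α < 1 then expAlpha α (max (-(b i) - Z) (-(1 / (1 - α))))
          else expAlpha α (-(b i) - Z))
        ≤ alphaMinimaxObj α b v := by
  rcases lt_or_gt_of_ne hα1 with hlt | hgt
  · -- case α < 1
    have h1α : (0:ℝ) < 1 - α := by linarith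
    have hβ := logAlpha_aux hα1
    have hneg1 : (1-α) * (-(1/(1-α))) = -1 := by field_simp
    simp only [if_pos hlt] at hsum ⊢
    have hbase : ∀ i, 0 ≤ (1-α) * (max (-(b i) - Z) (-(1/(1-α)))) + 1 := by
      intro i
      have h := le_max_right (-(b i) - Z) (-(1/(1-α)))
      nlinarith [mul_le_mul_of_nonneg_left h h1α.le]
    have hnonneg : ∀ i, 0 ≤ expAlpha α (max (-(b i) - Z) (-(1/(1-α)))) :=
      fun i => Real.rpow_nonneg (hbase i) _
    refine ⟨⟨hnonneg, hsum⟩, fun v hv => le_trans (obj_le_of α Z b _ ?_) ?_⟩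
    · -- upper bound : losses of v* are ≤ Z + b i
      intro i
      rcases le_or_gt (-(b i) - Z) (-(1/(1-α))) with hle | hgt2
      · have hV0 : expAlpha α (max (-(b i) - Z) (-(1/(1-α)))) = 0 := by
          rw [max_eq_right hle]
          unfold expAlpha
          rw [show (1-α) * (-(1/(1-α))) + 1 = 0 from by rw [hneg1]; ring,
            Real.zero_rpow (one_div_ne_zero hβ)]
        refine ⟨1/(1-α), ?_, by linarith⟩
        show lossAlpha α (expAlpha α (max (-(b i) - Z) (-(1/(1-α))))) = _
        rw [hV0]
        simp [lossAlpha, hlt]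
      · have hbpos : 0 < (1-α) * (-(b i) - Z) + 1 := by
          nlinarith [mul_lt_mul_of_pos_left hgt2 h1α]
        have hVpos : 0 < expAlpha α (-(b i) - Z) := Real.rpow_pos_of_pos hbpos _
        refine ⟨b i + Z, ?_, by linarith⟩
        show lossAlpha α (expAlpha α (max (-(b i) - Z) (-(1/(1-α))))) = _
        rw [max_eq_left hgt2.le, show lossAlpha α (expAlpha α (-(b i) - Z))
            = ((-logAlpha α (expAlpha α (-(b i) - Z)) : ℝ) : EReal) from if_pos hVpos,
          logAlpha_expAlpha hα1 hbpos, show -(-(b i) - Z) = b i + Z from by ring]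
    · -- lower bound
      have hex : ∃ j, (Z : EReal) ≤ lossAlpha α (v j) - (b j : EReal) := by
        by_contra hc
        push_neg at hc
        have hkey : ∀ j, expAlpha α (max (-(b j) - Z) (-(1/(1-α)))) ≤ v j ∧
            (0 < v j → expAlpha α (max (-(b j) - Z) (-(1/(1-α)))) < v j) := by
          intro j
          rcases eq_or_lt_of_le (hv.1 j) with h0 | hpos
          · have hcj := hc j
            rw [show lossAlpha α (v j) = ((1/(1-α) : ℝ) : EReal) from by
                rw [← h0]; simp [lossAlpha, hlt],
              ← EReal.coe_sub] at hcj
            have hr := EReal.coe_lt_coe_iff.1 hcj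
            have hle : -(b j) - Z ≤ -(1/(1-α)) := by linarith
            have hV0 : expAlpha α (max (-(b j) - Z) (-(1/(1-α)))) = 0 := by
              rw [max_eq_right hle]
              unfold expAlpha
              rw [show (1-α) * (-(1/(1-α))) + 1 = 0 from by rw [hneg1]; ring,
                Real.zero_rpow (one_div_ne_zero hβ)]
            exact ⟨by rw [hV0, ← h0], fun h => absurd h0.symm h.ne'⟩
          · have hcj := hc j
            rw [show lossAlpha α (v j) = ((-logAlpha α (v j) : ℝ) : EReal) from if_pos hpos,
              ← EReal.coe_sub] at hcj
            have hr := EReal.coe_lt_coe_iff.1 hcj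
            have hlog1 : -(b j) - Z < logAlpha α (v j) := by linarith
            have hlog2 : -(1/(1-α)) < logAlpha α (v j) := by
              unfold logAlpha
              rw [lt_div_iff₀ h1α]
              have hp := Real.rpow_pos_of_pos hpos (1-α)
              nlinarith
            have hmaxlt : max (-(b j) - Z) (-(1/(1-α))) < logAlpha α (v j) :=
              max_lt hlog1 hlog2
            have hstep : expAlpha α (max (-(b j) - Z) (-(1/(1-α))))
                < expAlpha α (logAlpha α (v j)) := by
              unfold expAlpha
              exact Real.rpow_lt_rpow (hbase j)
                (by nlinarith [mul_lt_mul_of_pos_left hmaxlt h1α]) (by positivity)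
            rw [expAlpha_logAlpha hα1 hpos] at hstep
            exact ⟨hstep.le, fun _ => hstep⟩
        obtain ⟨j₀, hj₀⟩ : ∃ j, 0 < v j := by
          by_contra hc2
          push_neg at hc2
          have hs0 : ∑ i, v i ≤ 0 := Finset.sum_nonpos fun i _ => hc2 i
          rw [hv.2] at hs0; linarith
        have hsumlt : ∑ i, expAlpha α (max (-(b i) - Z) (-(1/(1-α)))) < ∑ i, v i :=
          Finset.sum_lt_sum (fun i _ => (hkey i).1)
            ⟨j₀, Finset.mem_univ _, (hkey j₀).2 hj₀⟩
        rw [hsum, hv.2] at hsumlt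
        exact lt_irrefl 1 hsumlt
      obtain ⟨j, hj⟩ := hex
      exact le_obj_of α Z b v j hj
  · -- case α > 1
    have h1α : (1:ℝ) - α < 0 := by linarith
    have hβ := logAlpha_aux hα1
    have hneg1 : (1-α) * (-(1/(1-α))) = -1 := by field_simp
    have hnotlt : ¬ α < 1 := not_lt.2 hgt.le
    simp only [if_neg hnotlt] at hsum ⊢
    have hbpos : ∀ i, 0 < (1-α) * (-(b i) - Z) + 1 := by
      intro i
      nlinarith [mul_lt_mul_of_neg_left (hdom hgt i) h1α]
    have hVpos : ∀ i, 0 < expAlpha α (-(b i) - Z) :=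
      fun i => Real.rpow_pos_of_pos (hbpos i) _
    refine ⟨⟨fun i => (hVpos i).le, hsum⟩, fun v hv => le_trans (obj_le_of α Z b _ ?_) ?_⟩
    · intro i
      refine ⟨b i + Z, ?_, by linarith⟩
      show lossAlpha α (expAlpha α (-(b i) - Z)) = _
      rw [show lossAlpha α (expAlpha α (-(b i) - Z))
          = ((-logAlpha α (expAlpha α (-(b i) - Z)) : ℝ) : EReal) from if_pos (hVpos i),
        logAlpha_expAlpha hα1 (hbpos i), show -(-(b i) - Z) = b i + Z from by ring]
    · have hex : ∃ j, (Z : EReal) ≤ lossAlpha α (v j) - (b j : EReal) := by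
        by_contra hc
        push_neg at hc
        have hkey : ∀ j, expAlpha α (-(b j) - Z) < v j := by
          intro j
          rcases eq_or_lt_of_le (hv.1 j) with h0 | hpos
          · exfalso
            have hcj := hc j
            rw [show lossAlpha α (v j) = (⊤ : EReal) from by
                rw [← h0]; simp [lossAlpha, hnotlt],
              EReal.top_sub_coe] at hcj
            exact not_top_lt hcj
          · have hcj := hc j
            rw [show lossAlpha α (v j) = ((-logAlpha α (v j) : ℝ) : EReal) from if_pos hpos,
              ← EReal.coe_sub] at hcj
            have hr := EReal.coe_lt_coe_iff.1 hcj
            have hlog1 : -(b j) - Z < logAlpha α (v j) := by linarith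
            have hb2 : 0 < (1-α) * (logAlpha α (v j)) + 1 := by
              unfold logAlpha
              rw [show (1-α) * ((v j ^ (1-α) - 1)/(1-α)) + 1 = v j ^ (1-α) from by field_simp; ring]
              exact Real.rpow_pos_of_pos hpos _
            have hstep : expAlpha α (-(b j) - Z) < expAlpha α (logAlpha α (v j)) := by
              unfold expAlpha
              exact Real.rpow_lt_rpow_of_neg hb2
                (by nlinarith [mul_lt_mul_of_neg_left hlog1 h1α])
                (div_neg_of_pos_of_neg one_pos h1α)
            rwa [expAlpha_logAlpha hα1 hpos] at hstep
        haveI : Nonempty (Fin K) := ⟨⟨0, hK⟩⟩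
        have hsumlt : ∑ i, expAlpha α (-(b i) - Z) < ∑ i, v i :=
          Finset.sum_lt_sum_of_nonempty Finset.univ_nonempty fun i _ => hkey i
        rw [hsum, hv.2] at hsumlt
        exact lt_irrefl 1 hsumlt
      obtain ⟨j, hj⟩ := hex
      exact le_obj_of α Z b v j hj
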